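/- Let R₁ ⊆ R₂′ be von Neumann algebras on H, and suppose β(v) > 1 for some unit vector v, where β(x) = sup{|⟨Rx, x⟩| : R a Bell operator for R₁, R₂}. If x is a unit vector cyclic for R₁, then there exists A ∈ R₁ with Ax ≠ 0 such that β(Ax/‖Ax‖) > 1. -/

import Mathlib

open ContinuousLinearMap

variable {H : Type*} [NormedAddCommGroup H] [InnerProductSpace ℂ H] [CompleteSpace H]

/-- The set of Bell operators `(1/2)[A₁(B₁+B₂)+A₂(B₁−B₂)]` for a pair of
von Neumann algebras, with `Aᵢ ∈ R₁`, `Bᵢ ∈ R₂` self-adjoint contractions. -/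
def bellSet (R₁ R₂ : VonNeumannAlgebra H) : Set (H →L[ℂ] H) :=
  {R | ∃ A₁ A₂ B₁ B₂ : H →L[ℂ] H,
    A₁ ∈ R₁ ∧ A₂ ∈ R₁ ∧ B₁ ∈ R₂ ∧ B₂ ∈ R₂ ∧
    adjoint A₁ = A₁ ∧ adjoint A₂ = A₂ ∧ adjoint B₁ = B₁ ∧ adjoint B₂ = B₂ ∧
    ‖A₁‖ ≤ 1 ∧ ‖A₂‖ ≤ 1 ∧ ‖B₁‖ ≤ 1 ∧ ‖B₂‖ ≤ 1 ∧
    R = ((1 : ℂ)/2) • (A₁ * (B₁ + B₂) + A₂ * (B₁ - B₂))}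

/-- The Bell correlation coefficient of the vector state of `x`:
`β(x) = sup{|⟨Rx, x⟩| : R a Bell operator for R₁, R₂}`. -/
noncomputable def bellBetaVec (R₁ R₂ : VonNeumannAlgebra H) (x : H) : ℝ :=
  sSup ((fun R : H →L[ℂ] H => ‖(inner ℂ (R x) x : ℂ)‖) '' bellSet R₁ R₂)

lemma bell_norm_le {R₁ R₂ : VonNeumannAlgebra H} {R : H →L[ℂ] H}
    (hR : R ∈ bellSet R₁ R₂) : ‖R‖ ≤ 2 := by
  obtain ⟨A₁, A₂, B₁, B₂, -, -, -, -, -, -, -, -, hA1, hA2, hB1, hB2, rfl⟩ := hR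
  have h1 : ‖A₁ * (B₁ + B₂)‖ ≤ 2 := by
    refine le_trans (norm_mul_le _ _) ?_
    have := norm_add_le B₁ B₂
    nlinarith [norm_nonneg A₁, norm_nonneg (B₁ + B₂)]
  have h2 : ‖A₂ * (B₁ - B₂)‖ ≤ 2 := by
    refine le_trans (norm_mul_le _ _) ?_
    have := norm_sub_le B₁ B₂
    nlinarith [norm_nonneg A₂, norm_nonneg (B₁ - B₂)]
  have hs : ‖((1 : ℂ)/2)‖ = 1/2 := by norm_num
  calc ‖((1 : ℂ)/2) • (A₁ * (B₁ + B₂) + A₂ * (B₁ - B₂))‖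
      = (1/2) * ‖A₁ * (B₁ + B₂) + A₂ * (B₁ - B₂)‖ := by rw [norm_smul, hs]
    _ ≤ (1/2) * (‖A₁ * (B₁ + B₂)‖ + ‖A₂ * (B₁ - B₂)‖) := by
        have := norm_add_le (A₁ * (B₁ + B₂)) (A₂ * (B₁ - B₂)); linarith
    _ ≤ 2 := by linarith

lemma bell_bdd (R₁ R₂ : VonNeumannAlgebra H) {y : H} (hy : ‖y‖ = 1) :
    BddAbove ((fun R : H →L[ℂ] H => ‖(inner ℂ (R y) y : ℂ)‖) '' bellSet R₁ R₂) := by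
  refine ⟨2, ?_⟩
  rintro r ⟨R, hR, rfl⟩
  have h1 : ‖(inner ℂ (R y) y : ℂ)‖ ≤ ‖R y‖ * ‖y‖ := by
    exact norm_inner_le_norm _ _
  have h2 : ‖R y‖ ≤ ‖R‖ * ‖y‖ := R.le_opNorm y
  have h3 := bell_norm_le hR
  simp only [hy, mul_one] at h1 h2
  dsimp only
  linarith

/-- If `β(v) > 1` for some unit vector `v` and `x` is a unit
vector cyclic for `R₁`, then there exists `A ∈ R₁` with `Ax ≠ 0` such that
`β(Ax/‖Ax‖) > 1`. -/
theorem stmt19 (R₁ R₂ : VonNeumannAlgebra H) (hR : R₁ ≤ R₂.commutant)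
    (v : H) (hv : ‖v‖ = 1) (hbv : 1 < bellBetaVec R₁ R₂ v)
    (x : H) (hx : ‖x‖ = 1)
    (hcyc : Dense {z : H | ∃ A ∈ R₁, A x = z}) :
    ∃ A ∈ R₁, A x ≠ 0 ∧ 1 < bellBetaVec R₁ R₂ (‖A x‖⁻¹ • A x) := by
  -- get a Bell operator nearly attaining the sup at v
  have hne : ((fun R : H →L[ℂ] H =>
      ‖(inner ℂ (R v) v : ℂ)‖) '' bellSet R₁ R₂).Nonempty := by
    by_contra h
    rw [Set.not_nonempty_iff_eq_empty] at h
    rw [bellBetaVec, h, Real.sSup_empty] at hbv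
    linarith
  obtain ⟨r, hrmem, hr1⟩ := exists_lt_of_lt_csSup hne hbv
  obtain ⟨R, hRmem, rfl⟩ := hrmem
  dsimp only at hr1
  set c : ℝ := ‖(inner ℂ (R v) v : ℂ)‖ with hc
  have hRn : ‖R‖ ≤ 2 := bell_norm_le hRmem
  have hRnn : (0:ℝ) ≤ ‖R‖ := norm_nonneg R
  -- choose δ
  set δ : ℝ := min (1/2) ((c - 1)/9) with hδdef
  have hδpos : 0 < δ := lt_min (by norm_num) (by linarith)
  have hδhalf : δ ≤ 1/2 := min_le_left _ _
  have hδc : δ ≤ (c - 1)/9 := min_le_right _ _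
  -- approximate v by A x using cyclicity
  have hvcl : v ∈ closure {z : H | ∃ A ∈ R₁, A x = z} := hcyc v
  obtain ⟨z, ⟨A, hA, rfl⟩, hzd⟩ := Metric.mem_closure_iff.mp hvcl δ hδpos
  have hAxv : ‖A x - v‖ < δ := by rwa [dist_eq_norm, norm_sub_rev] at hzd
  -- A x ≠ 0
  have hlow : (1:ℝ)/2 ≤ ‖A x‖ := by
    have h1 : ‖v‖ - ‖A x‖ ≤ ‖v - A x‖ := norm_sub_norm_le v (A x)
    rw [hv, norm_sub_rev] at h1
    linarith
  have hAx0 : A x ≠ 0 := by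
    intro h
    rw [h, norm_zero] at hlow
    linarith
  have hAxnz : ‖A x‖ ≠ 0 := by positivity
  refine ⟨A, hA, hAx0, ?_⟩
  set u : H := ‖A x‖⁻¹ • A x with hu
  have hun : ‖u‖ = 1 := by
    rw [hu, norm_smul, norm_inv, norm_norm, inv_mul_cancel₀ hAxnz]
  -- ‖u - v‖ ≤ 2δ
  have hAxu : A x = ‖A x‖ • u := by
    rw [hu, smul_smul, mul_inv_cancel₀ hAxnz, one_smul]
  have huAx : ‖u - A x‖ = |1 - ‖A x‖| := by
    calc ‖u - A x‖ = ‖(1 - ‖A x‖) • u‖ := by rw [sub_smul, one_smul, ← hAxu]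
      _ = |1 - ‖A x‖| * ‖u‖ := by rw [norm_smul, Real.norm_eq_abs]
      _ = |1 - ‖A x‖| := by rw [hun, mul_one]
  have h1Ax : |1 - ‖A x‖| ≤ ‖A x - v‖ := by
    have := abs_norm_sub_norm_le v (A x)
    rw [hv, norm_sub_rev] at this
    exact this
  have huv : ‖u - v‖ ≤ 2 * δ := by
    have h := norm_sub_le_norm_sub_add_norm_sub u (A x) v
    calc ‖u - v‖ ≤ ‖u - A x‖ + ‖A x - v‖ := h
      _ ≤ ‖A x - v‖ + ‖A x - v‖ := by rw [huAx]; linarith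
      _ ≤ 2 * δ := by linarith
  -- main continuity estimate
  have hkey : (inner ℂ (R u) u : ℂ) - inner ℂ (R v) v
      = inner ℂ (R (u - v)) u + inner ℂ (R v) (u - v) := by
    rw [map_sub, inner_sub_left, inner_sub_right]
    ring
  have hdiff : ‖((inner ℂ (R u) u : ℂ) - inner ℂ (R v) v)‖ ≤ 8 * δ := by
    rw [hkey]
    have e1 : ‖(inner ℂ (R (u - v)) u : ℂ)‖ ≤ ‖R (u - v)‖ * ‖u‖ := norm_inner_le_norm _ _
    have e2 : ‖(inner ℂ (R v) (u - v) : ℂ)‖ ≤ ‖R v‖ * ‖u - v‖ := norm_inner_le_norm _ _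
    have e3 : ‖R (u - v)‖ ≤ ‖R‖ * ‖u - v‖ := R.le_opNorm _
    have e4 : ‖R v‖ ≤ ‖R‖ * ‖v‖ := R.le_opNorm _
    have e5 := norm_add_le (inner ℂ (R (u - v)) u : ℂ) (inner ℂ (R v) (u - v) : ℂ)
    rw [hun, mul_one] at e1
    rw [hv, mul_one] at e4
    have huvnn : (0:ℝ) ≤ ‖u - v‖ := norm_nonneg _
    nlinarith
  have hRu : 1 < ‖(inner ℂ (R u) u : ℂ)‖ := by
    have htri : c ≤ ‖(inner ℂ (R u) u : ℂ)‖
        + ‖((inner ℂ (R u) u : ℂ) - inner ℂ (R v) v)‖ := by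
      have h2 := norm_sub_le (inner ℂ (R u) u : ℂ) ((inner ℂ (R u) u : ℂ) - inner ℂ (R v) v)
      have e : (inner ℂ (R u) u : ℂ) - ((inner ℂ (R u) u : ℂ) - inner ℂ (R v) v) = inner ℂ (R v) v := by
        ring
      rw [e] at h2
      rw [hc]
      exact h2
    linarith
  -- conclude
  have hmem : ‖(inner ℂ (R u) u : ℂ)‖
      ∈ (fun R : H →L[ℂ] H => ‖(inner ℂ (R u) u : ℂ)‖) '' bellSet R₁ R₂ :=
    ⟨R, hRmem, rfl⟩
  have := le_csSup (bell_bdd R₁ R₂ hun) hmem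
  rw [bellBetaVec]
  linarith
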